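/- Suppose {x^k}_{k≥0} satisfies condition H1 and, in addition, Φ(x^k) ≤ C_{k+m} holds for some fixed k ≥ 1 and some positive integer m. Then √(τ·(C_k − C_{k+m})) ≤ √(1−τ) · Ξ_{k−1}, and consequently (√τ/√m) · Σ_{i=k}^{k+m−1} Ξ_i ≤ √(1−τ) · Ξ_{k−1}. -/

import Mathlib

/-- Case 1 (`k ∈ K₁`) of Lemma 3.1: under condition H1, if `Φ(x^k) ≤ C_{k+m}` then
`√(τ(C_k − C_{k+m})) ≤ √(1−τ)·Ξ_{k−1}` and consequently
`(√τ/√m)·Σ_{i=k}^{k+m−1} Ξ_i ≤ √(1−τ)·Ξ_{k−1}`. -/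
theorem stmt_6 {X : Type*} [NormedAddCommGroup X] [NormedSpace ℝ X]
    (Φ : X → ℝ) (x : ℕ → X) (a τs C : ℕ → ℝ) (abar τ : ℝ)
    (habar : 0 < abar) (hτ0 : 0 < τ) (hτ1 : τ ≤ 1)
    (ha : ∀ k : ℕ, abar ≤ a (k + 1))
    (hτs : ∀ k : ℕ, τs (k + 1) ∈ Set.Icc τ 1)
    (hC0 : C 0 = Φ (x 0))
    (hCrec : ∀ k : ℕ, C (k + 1) = (1 - τs (k + 1)) * C k + τs (k + 1) * Φ (x (k + 1)))
    (hH1 : ∀ k : ℕ, Φ (x (k + 1)) + a (k + 1) * ‖x (k + 1) - x k‖ ^ 2 ≤ C k)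
    (hbdd : ∃ M : ℝ, ∀ k : ℕ, M ≤ Φ (x k))
    (k m : ℕ) (hk : 1 ≤ k) (hm : 1 ≤ m)
    (hkK1 : Φ (x k) ≤ C (k + m)) :
    Real.sqrt (τ * (C k - C (k + m))) ≤ Real.sqrt (1 - τ) * Real.sqrt (C (k - 1) - C k) ∧
      (Real.sqrt τ / Real.sqrt (m : ℝ)) *
          ∑ i ∈ Finset.Icc k (k + m - 1), Real.sqrt (C i - C (i + 1)) ≤
        Real.sqrt (1 - τ) * Real.sqrt (C (k - 1) - C k) := by
  -- C is nonincreasing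
  have hmono : ∀ n : ℕ, C (n + 1) ≤ C n := by
    intro n
    have h1 := hH1 n
    have h2 := hCrec n
    have ht := hτs n
    obtain ⟨ht1, ht2⟩ := ht
    have hnn : 0 ≤ a (n + 1) * ‖x (n + 1) - x n‖ ^ 2 :=
      mul_nonneg (le_trans habar.le (ha n)) (by positivity)
    have hΦ : Φ (x (n + 1)) ≤ C n := by linarith
    nlinarith [mul_le_mul_of_nonneg_left hΦ (le_trans hτ0.le ht1)]
  have hanti : ∀ i j : ℕ, i ≤ j → C j ≤ C i := by
    intro i j hij
    induction j with
    | zero => simpa [Nat.le_zero.mp hij]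
    | succ n ih =>
      rcases Nat.lt_or_ge i (n + 1) with h | h
      · exact le_trans (hmono n) (ih (Nat.lt_succ_iff.mp h))
      · have : i = n + 1 := le_antisymm hij h
        simp [this]
  -- key inequality
  obtain ⟨j, rfl⟩ : ∃ j, k = j + 1 := ⟨k - 1, (Nat.succ_pred_eq_of_pos hk).symm⟩
  have hkm1 : j + 1 - 1 = j := rfl
  have hrec := hCrec j
  obtain ⟨ht1, ht2⟩ := hτs j
  have hmonok : C (j + 1) ≤ C j := hmono j
  have key : τ * (C (j + 1) - C (j + 1 + m)) ≤ (1 - τ) * (C j - C (j + 1)) := by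
    have hτk : 0 < τs (j + 1) := lt_of_lt_of_le hτ0 ht1
    nlinarith [mul_le_mul_of_nonneg_left hkK1 (mul_nonneg hτ0.le hτk.le),
      mul_le_mul_of_nonneg_right ht1 (sub_nonneg.mpr hmonok)]
  have hCd : 0 ≤ C j - C (j + 1) := by linarith
  have first : Real.sqrt (τ * (C (j + 1) - C (j + 1 + m))) ≤
      Real.sqrt (1 - τ) * Real.sqrt (C j - C (j + 1)) := by
    rw [← Real.sqrt_mul (by linarith : (0:ℝ) ≤ 1 - τ)]
    exact Real.sqrt_le_sqrt key
  refine ⟨first, ?_⟩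
  -- second: Cauchy-Schwarz + telescoping
  have hsum : ∑ i ∈ Finset.Icc (j + 1) (j + 1 + m - 1), Real.sqrt (C i - C (i + 1)) =
      ∑ i ∈ Finset.range m, Real.sqrt (C (j + 1 + i) - C (j + 1 + i + 1)) := by
    have h1 : j + 1 + m - 1 = j + m := by omega
    rw [h1, ← Finset.Ico_add_one_right_eq_Icc, Finset.sum_Ico_eq_sum_range]
    have h2 : j + m + 1 - (j + 1) = m := by omega
    rw [h2]
  have htel : ∑ i ∈ Finset.range m, (C (j + 1 + i) - C (j + 1 + i + 1)) =
      C (j + 1) - C (j + 1 + m) := by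
    have := Finset.sum_range_sub' (fun i => C (j + 1 + i)) m
    simpa [← add_assoc] using this
  have hd : ∀ i, 0 ≤ C (j + 1 + i) - C (j + 1 + i + 1) := fun i =>
    sub_nonneg.mpr (hmono _)
  have hCS : (∑ i ∈ Finset.range m, Real.sqrt (C (j + 1 + i) - C (j + 1 + i + 1))) ^ 2 ≤
      m * (C (j + 1) - C (j + 1 + m)) := by
    calc (∑ i ∈ Finset.range m, Real.sqrt (C (j + 1 + i) - C (j + 1 + i + 1))) ^ 2
        ≤ (Finset.range m).card *
          ∑ i ∈ Finset.range m, Real.sqrt (C (j + 1 + i) - C (j + 1 + i + 1)) ^ 2 :=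
          sq_sum_le_card_mul_sum_sq
      _ = m * (C (j + 1) - C (j + 1 + m)) := by
          rw [Finset.card_range]
          congr 1
          rw [← htel]
          exact Finset.sum_congr rfl fun i _ => Real.sq_sqrt (hd i)
  have hsnn : 0 ≤ ∑ i ∈ Finset.range m, Real.sqrt (C (j + 1 + i) - C (j + 1 + i + 1)) :=
    Finset.sum_nonneg fun i _ => Real.sqrt_nonneg _
  have hsle : ∑ i ∈ Finset.range m, Real.sqrt (C (j + 1 + i) - C (j + 1 + i + 1)) ≤
      Real.sqrt m * Real.sqrt (C (j + 1) - C (j + 1 + m)) := by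
    rw [← Real.sqrt_mul (by positivity : (0:ℝ) ≤ (m:ℝ))]
    have hnn2 : (0:ℝ) ≤ (m:ℝ) * (C (j + 1) - C (j + 1 + m)) :=
      mul_nonneg (by positivity) (sub_nonneg.mpr (hanti _ _ (by omega)))
    exact (Real.le_sqrt hsnn hnn2).mpr hCS
  have hm0 : 0 < Real.sqrt (m : ℝ) := Real.sqrt_pos.mpr (by exact_mod_cast hm)
  rw [hsum]
  calc Real.sqrt τ / Real.sqrt m *
        ∑ i ∈ Finset.range m, Real.sqrt (C (j + 1 + i) - C (j + 1 + i + 1))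
      ≤ Real.sqrt τ / Real.sqrt m *
        (Real.sqrt m * Real.sqrt (C (j + 1) - C (j + 1 + m))) := by
        apply mul_le_mul_of_nonneg_left hsle (by positivity)
    _ = Real.sqrt (τ * (C (j + 1) - C (j + 1 + m))) := by
        rw [Real.sqrt_mul hτ0.le]
        field_simp
    _ ≤ Real.sqrt (1 - τ) * Real.sqrt (C j - C (j + 1)) := first
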